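/- Let a, b, c > 0 with d = 1 − (a+b+c) ≥ 0, let |ψ_W⟩ = √a|001⟩ + √b|010⟩ + √c|100⟩ + √d|000⟩ and ρ_ABC = |ψ_W⟩⟨ψ_W|. Set V = [(√a+√b+√c)² + d]·[(√a+√b−√c)² + d]·[(√a−√b+√c)² + d]·[(−√a+√b+√c)² + d]. Then ⟨CHSH⟩²_{ρ_AB} + ⟨CHSH⟩²_{ρ_BC} + ⟨CHSH⟩²_{ρ_AC} = 2[3(1 + √V) + 4(ab + ac + bc)]. -/

import Mathlib

set_option maxHeartbeats 2000000


open Matrix Finset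

noncomputable section

/-- The three Pauli matrices σ₁, σ₂, σ₃. -/
def pauli : Fin 3 → Matrix (Fin 2) (Fin 2) ℂ :=
  ![!![0, 1; 1, 0], !![0, -Complex.I; Complex.I, 0], !![1, 0; 0, -1]]

/-- Kronecker (tensor) product of two one-qubit matrices. -/
def kron2 (A B : Matrix (Fin 2) (Fin 2) ℂ) :
    Matrix (Fin 2 × Fin 2) (Fin 2 × Fin 2) ℂ :=
  fun p q => A p.1 q.1 * B p.2 q.2

/-- Correlation matrix M(ρ) of a two-qubit density matrix: M ij = tr (ρ (σᵢ ⊗ σⱼ)). -/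
def corr (ρ : Matrix (Fin 2 × Fin 2) (Fin 2 × Fin 2) ℂ) :
    Matrix (Fin 3) (Fin 3) ℝ :=
  fun i j => ((ρ * kron2 (pauli i) (pauli j)).trace).re

lemma corr_herm (ρ : Matrix (Fin 2 × Fin 2) (Fin 2 × Fin 2) ℂ) :
    ((corr ρ)ᵀ * corr ρ).IsHermitian := by
  simpa [Matrix.conjTranspose_eq_transpose_of_trivial] using
    Matrix.isHermitian_conjTranspose_mul_self (corr ρ)

/-- Maximal CHSH violation squared:  ⟨CHSH⟩²_ρ = 4(τ₁+τ₂) where τ₁ ≥ τ₂ ≥ τ₃ are the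
eigenvalues of M(ρ)ᵀM(ρ); equivalently 4(tr(MᵀM) − τ₃) where τ₃ is the smallest one. -/
def CHSHsq (ρ : Matrix (Fin 2 × Fin 2) (Fin 2 × Fin 2) ℂ) : ℝ :=
  4 * (((corr ρ)ᵀ * corr ρ).trace -
        Finset.univ.inf' Finset.univ_nonempty (corr_herm ρ).eigenvalues)

/-- Partial trace over the third qubit: ρ_AB. -/
def ptrC (ρ : Matrix (Fin 2 × Fin 2 × Fin 2) (Fin 2 × Fin 2 × Fin 2) ℂ) :
    Matrix (Fin 2 × Fin 2) (Fin 2 × Fin 2) ℂ :=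
  fun p q => ∑ m : Fin 2, ρ (p.1, p.2, m) (q.1, q.2, m)

/-- Partial trace over the second qubit: ρ_AC. -/
def ptrB (ρ : Matrix (Fin 2 × Fin 2 × Fin 2) (Fin 2 × Fin 2 × Fin 2) ℂ) :
    Matrix (Fin 2 × Fin 2) (Fin 2 × Fin 2) ℂ :=
  fun p q => ∑ m : Fin 2, ρ (p.1, m, p.2) (q.1, m, q.2)

/-- Partial trace over the first qubit: ρ_BC. -/
def ptrA (ρ : Matrix (Fin 2 × Fin 2 × Fin 2) (Fin 2 × Fin 2 × Fin 2) ℂ) :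
    Matrix (Fin 2 × Fin 2) (Fin 2 × Fin 2) ℂ :=
  fun p q => ∑ m : Fin 2, ρ (m, p.1, p.2) (m, q.1, q.2)

/-- Density matrix |ψ⟩⟨ψ| of a 3-qubit pure state. -/
def pureState3 (ψ : Fin 2 × Fin 2 × Fin 2 → ℂ) :
    Matrix (Fin 2 × Fin 2 × Fin 2) (Fin 2 × Fin 2 × Fin 2) ℂ :=
  fun p q => ψ p * (starRingEnd ℂ) (ψ q)

/-- The one-qubit basis vector |0⟩. -/
def ket0 : Fin 2 → ℂ := ![1, 0]

/-- The one-qubit basis vector |1⟩. -/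
def ket1 : Fin 2 → ℂ := ![0, 1]

end



noncomputable def redMat (w x y v : ℝ) : Matrix (Fin 2 × Fin 2) (Fin 2 × Fin 2) ℂ :=
  fun p q => ((!![w, x; y, 0] p.1 p.2 * !![w, x; y, 0] q.1 q.2
    + !![v, 0; 0, 0] p.1 p.2 * !![v, 0; 0, 0] q.1 q.2 : ℝ) : ℂ)

lemma corr_redMat (w x y v : ℝ) :
    corr (redMat w x y v) =
      !![2*x*y, 0, 2*y*w; 0, 2*x*y, 0; 2*x*w, 0, w^2 + v^2 - x^2 - y^2] := by
  ext i j
  fin_cases i <;> fin_cases j <;>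
    simp [corr, redMat, kron2, pauli, Matrix.trace, Matrix.diag, Matrix.mul_apply,
      Fintype.sum_prod_type, Fin.sum_univ_two, Complex.add_re, Complex.mul_re] <;>
    ring

lemma det_smul_one_sub_eig {n : Type*} [Fintype n] [DecidableEq n]
    {N : Matrix n n ℝ} (hN : N.IsHermitian) (t : ℝ) :
    (t • (1 : Matrix n n ℝ) - N).det = ∏ i, (t - hN.eigenvalues i) := by
  set U : Matrix n n ℝ := (hN.eigenvectorUnitary : Matrix n n ℝ) with hUdef
  have hU : U * star U = 1 := (Matrix.mem_unitaryGroup_iff).mp hN.eigenvectorUnitary.2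
  have hU' : star U * U = 1 := (Unitary.mem_iff.mp hN.eigenvectorUnitary.2).1
  have key : t • (1 : Matrix n n ℝ) - N
      = U * (t • (1 : Matrix n n ℝ) - diagonal (RCLike.ofReal ∘ hN.eigenvalues)) * star U := by
    rw [Matrix.mul_sub, Matrix.sub_mul]
    have hs := hN.spectral_theorem
    simp only [Unitary.conjStarAlgAut_apply] at hs
    rw [Matrix.mul_smul, Matrix.mul_one, Matrix.smul_mul, hU, ← hs]
  rw [key, det_mul, det_mul, mul_comm, ← mul_assoc, ← det_mul, hU', det_one, one_mul,
    Matrix.smul_one_eq_diagonal, Matrix.diagonal_sub, Matrix.det_diagonal]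
  simp

lemma inf_eig_eq (e : Fin 3 → ℝ) (r₁ r₂ r₃ : ℝ) (h12 : r₁ ≤ r₂) (h13 : r₁ ≤ r₃)
    (hprod : ∀ t : ℝ, ∏ i, (t - e i) = (t - r₁) * (t - r₂) * (t - r₃)) :
    Finset.univ.inf' Finset.univ_nonempty e = r₁ := by
  have hmem : ∀ i, e i = r₁ ∨ e i = r₂ ∨ e i = r₃ := by
    intro i
    have h0 : ∏ j, (e i - e j) = 0 :=
      Finset.prod_eq_zero (Finset.mem_univ i) (by ring)
    have := (hprod (e i)).symm.trans h0
    rcases mul_eq_zero.mp this with h | h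
    · rcases mul_eq_zero.mp h with h | h
      · exact Or.inl (by linarith [sub_eq_zero.mp h])
      · exact Or.inr (Or.inl (by linarith [sub_eq_zero.mp h]))
    · exact Or.inr (Or.inr (by linarith [sub_eq_zero.mp h]))
  have hex : ∃ i, e i = r₁ := by
    have h0 : (r₁ - r₁) * (r₁ - r₂) * (r₁ - r₃) = 0 := by ring
    have := (hprod r₁).trans h0
    obtain ⟨i, _, hi⟩ := Finset.prod_eq_zero_iff.mp this
    exact ⟨i, by linarith [sub_eq_zero.mp hi]⟩
  obtain ⟨i, hi⟩ := hex
  refine le_antisymm (hi ▸ Finset.inf'_le _ (Finset.mem_univ i)) (Finset.le_inf' _ _ ?_)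
  intro j _
  rcases hmem j with h | h | h <;> simp [h, h12, h13]

lemma pair_CHSH (x y z d : ℝ) (hx : 0 ≤ x) (hy : 0 ≤ y) (hz : 0 ≤ z) (hd0 : 0 ≤ d)
    (V : ℝ)
    (hV : V = ((Real.sqrt x + Real.sqrt y + Real.sqrt z) ^ 2 + d) *
              ((Real.sqrt x + Real.sqrt y - Real.sqrt z) ^ 2 + d) *
              ((Real.sqrt x - Real.sqrt y + Real.sqrt z) ^ 2 + d) *
              ((-Real.sqrt x + Real.sqrt y + Real.sqrt z) ^ 2 + d)) :
    CHSHsq (redMat (Real.sqrt d) (Real.sqrt x) (Real.sqrt y) (Real.sqrt z)) =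
      16*x*y + 2*(4*x*y + 4*y*d + 4*x*d + (z + d - x - y)^2) + 2*Real.sqrt V := by
  subst hV
  have hX2 : Real.sqrt x ^ 2 = x := Real.sq_sqrt hx
  have hY2 : Real.sqrt y ^ 2 = y := Real.sq_sqrt hy
  have hZ2 : Real.sqrt z ^ 2 = z := Real.sq_sqrt hz
  have hW2 : Real.sqrt d ^ 2 = d := Real.sq_sqrt hd0
  generalize hXg : Real.sqrt x = X at *
  generalize hYg : Real.sqrt y = Y at *
  generalize hZg : Real.sqrt z = Z at *
  generalize hWg : Real.sqrt d = W at *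
  subst hX2 hY2 hZ2 hW2
  have hX0 : 0 ≤ X := hXg ▸ Real.sqrt_nonneg _
  have hY0 : 0 ≤ Y := hYg ▸ Real.sqrt_nonneg _
  have hZ0 : 0 ≤ Z := hZg ▸ Real.sqrt_nonneg _
  have hW0 : 0 ≤ W := hWg ▸ Real.sqrt_nonneg _
  clear hXg hYg hZg hWg hx hy hz hd0
  set ρ₂ := redMat W X Y Z with hρ₂
  -- abbreviations
  set T : ℝ := 4*X^2*Y^2 + 4*Y^2*W^2 + 4*X^2*W^2 + (W^2 + Z^2 - X^2 - Y^2)^2 with hT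
  set V : ℝ := ((X + Y + Z) ^ 2 + W^2) * ((X + Y - Z) ^ 2 + W^2) *
      ((X - Y + Z) ^ 2 + W^2) * ((-X + Y + Z) ^ 2 + W^2) with hVdef
  have hV0 : 0 ≤ V := by rw [hVdef]; positivity
  set S : ℝ := Real.sqrt V with hS
  have hS0 : 0 ≤ S := Real.sqrt_nonneg _
  have hS2 : S ^ 2 = V := Real.sq_sqrt hV0
  have hVT : V = T^2 - 4*(2*X*Y*(Z^2 - X^2 - Y^2 - W^2))^2 := by
    rw [hVdef, hT]; ring
  have hS2' : S ^ 2 = T^2 - 4*(2*X*Y*(Z^2 - X^2 - Y^2 - W^2))^2 := hS2.trans hVT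
  have hMc : corr ρ₂ = !![2*X*Y, 0, 2*Y*W; 0, 2*X*Y, 0; 2*X*W, 0, W^2 + Z^2 - X^2 - Y^2] :=
    corr_redMat W X Y Z
  have h13 : (T - S)/2 ≤ (T + S)/2 := by linarith
  have h12 : (T - S)/2 ≤ 4*X^2*Y^2 := by
    have hkey : V - (T - 8*X^2*Y^2)^2 = 64*X^2*Y^2*W^2*Z^2 := by
      rw [hVdef, hT]; ring
    have h2 : (T - 8*X^2*Y^2)^2 ≤ V := by nlinarith [sq_nonneg (X*Y*W*Z)]
    have h3 : T - 8*X^2*Y^2 ≤ S := by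
      calc T - 8*X^2*Y^2 ≤ |T - 8*X^2*Y^2| := le_abs_self _
        _ = Real.sqrt ((T - 8*X^2*Y^2)^2) := (Real.sqrt_sq_eq_abs _).symm
        _ ≤ Real.sqrt V := Real.sqrt_le_sqrt h2
        _ = S := rfl
    linarith
  have hdet : ∀ t : ℝ, (t • (1 : Matrix (Fin 3) (Fin 3) ℝ) - (corr ρ₂)ᵀ * corr ρ₂).det
      = (t - (T - S)/2) * (t - 4*X^2*Y^2) * (t - (T + S)/2) := by
    intro t
    rw [hMc]
    simp [Matrix.det_fin_three, Matrix.mul_apply, Fin.sum_univ_three, Matrix.one_apply,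
      Matrix.smul_apply, Matrix.sub_apply, Matrix.transpose_apply, Matrix.vecHead, Matrix.vecTail, Function.comp]
    rw [hT]
    linear_combination ((t - 4*X^2*Y^2)/4) * hS2'
  have hinf : Finset.univ.inf' Finset.univ_nonempty (corr_herm ρ₂).eigenvalues = (T - S)/2 :=
    inf_eig_eq _ _ _ _ h12 h13 (fun t => by
      rw [← det_smul_one_sub_eig (corr_herm ρ₂) t, hdet t])
  have htr : ((corr ρ₂)ᵀ * corr ρ₂).trace
      = 4*X^2*Y^2 + T := by
    rw [hMc, hT]
    simp [Matrix.trace_fin_three, Matrix.mul_apply, Fin.sum_univ_three, Matrix.transpose_apply, Matrix.vecHead, Matrix.vecTail, Function.comp]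
    ring
  rw [CHSHsq, hinf, htr, hT]
  ring

noncomputable section
end

lemma ptr_red (a b c d : ℝ)
    (ψ : Fin 2 × Fin 2 × Fin 2 → ℂ)
    (hψ : ψ = fun p =>
      (Real.sqrt a : ℂ) * (ket0 p.1 * ket0 p.2.1 * ket1 p.2.2) +
      (Real.sqrt b : ℂ) * (ket0 p.1 * ket1 p.2.1 * ket0 p.2.2) +
      (Real.sqrt c : ℂ) * (ket1 p.1 * ket0 p.2.1 * ket0 p.2.2) +
      (Real.sqrt d : ℂ) * (ket0 p.1 * ket0 p.2.1 * ket0 p.2.2)) :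
    ptrC (pureState3 ψ) = redMat (Real.sqrt d) (Real.sqrt b) (Real.sqrt c) (Real.sqrt a)
    ∧ ptrA (pureState3 ψ) = redMat (Real.sqrt d) (Real.sqrt a) (Real.sqrt b) (Real.sqrt c)
    ∧ ptrB (pureState3 ψ) = redMat (Real.sqrt d) (Real.sqrt a) (Real.sqrt c) (Real.sqrt b) := by
  subst hψ
  refine ⟨?_, ?_, ?_⟩ <;>
  · ext ⟨p₁, p₂⟩ ⟨q₁, q₂⟩
    fin_cases p₁ <;> fin_cases p₂ <;> fin_cases q₁ <;> fin_cases q₂ <;>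
      simp [ptrC, ptrA, ptrB, pureState3, redMat, ket0, ket1, Fin.sum_univ_two,
        Complex.conj_ofReal, map_add, _root_.map_mul]


theorem chsh_sum_W_state
    (a b c d : ℝ) (ha : 0 < a) (hb : 0 < b) (hc : 0 < c)
    (hd : d = 1 - (a + b + c)) (hd0 : 0 ≤ d)
    (ψ : Fin 2 × Fin 2 × Fin 2 → ℂ)
    (hψ : ψ = fun p =>
      (Real.sqrt a : ℂ) * (ket0 p.1 * ket0 p.2.1 * ket1 p.2.2) +
      (Real.sqrt b : ℂ) * (ket0 p.1 * ket1 p.2.1 * ket0 p.2.2) +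
      (Real.sqrt c : ℂ) * (ket1 p.1 * ket0 p.2.1 * ket0 p.2.2) +
      (Real.sqrt d : ℂ) * (ket0 p.1 * ket0 p.2.1 * ket0 p.2.2))
    (ρ : Matrix (Fin 2 × Fin 2 × Fin 2) (Fin 2 × Fin 2 × Fin 2) ℂ)
    (hρ : ρ = pureState3 ψ)
    (V : ℝ)
    (hV : V = ((Real.sqrt a + Real.sqrt b + Real.sqrt c) ^ 2 + d) *
              ((Real.sqrt a + Real.sqrt b - Real.sqrt c) ^ 2 + d) *
              ((Real.sqrt a - Real.sqrt b + Real.sqrt c) ^ 2 + d) *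
              ((-Real.sqrt a + Real.sqrt b + Real.sqrt c) ^ 2 + d)) :
    CHSHsq (ptrC ρ) + CHSHsq (ptrA ρ) + CHSHsq (ptrB ρ) =
      2 * (3 * (1 + Real.sqrt V) + 4 * (a * b + a * c + b * c)) := by
  subst hρ
  obtain ⟨hC, hA, hB⟩ := ptr_red a b c d ψ hψ
  rw [hC, hA, hB]
  rw [pair_CHSH b c a d hb.le hc.le ha.le hd0 V (by rw [hV]; try ring),
    pair_CHSH a b c d ha.le hb.le hc.le hd0 V (by rw [hV]; try ring),
    pair_CHSH a c b d ha.le hc.le hb.le hd0 V (by rw [hV]; try ring)]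
  have hd' : d = 1 - (a + b + c) := hd
  subst hd'
  ring
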